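/- Let f : ℝⁿ → ℝ be a convex function, C ⊆ ℝⁿ a nonempty, closed and convex set, x₀ ∈ C, τ ≥ 0, z ∈ ℝⁿ, and y = x₀ + z. Let x* be the unique minimizer over x ∈ C of τ f(x) + (1/2)‖y − x‖₂², and set w* = x* − x₀. Then ‖w*‖₂ ≤ dist(z, τ∂f(x₀) + T_C(x₀)*), where the sum is a Minkowski sum and the set τ∂f(x₀) + T_C(x₀)* is closed. -/

import Mathlib

open MeasureTheory ProbabilityTheory Filter Topology Metric
open scoped RealInnerProductSpace ENNReal Pointwise Matrix

noncomputable section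

/-- Standard Gaussian measure on `ℝⁿ` (mean zero, identity covariance). -/
def stdGaussian (n : ℕ) : Measure (EuclideanSpace ℝ (Fin n)) :=
  Measure.map (⇑(EuclideanSpace.equiv (Fin n) ℝ).symm)
    (Measure.pi fun _ : Fin n => gaussianReal 0 1)

/-- `D(K)`: mean squared distance of a standard Gaussian vector to `K`. -/
def msd (n : ℕ) (K : Set (EuclideanSpace ℝ (Fin n))) : ℝ :=
  ∫ g, (Metric.infDist g K) ^ 2 ∂(stdGaussian n)

variable {E : Type*} [NormedAddCommGroup E] [InnerProductSpace ℝ E]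

/-- Subdifferential of `f` at `x₀`. -/
def subdiff (f : E → ℝ) (x₀ : E) : Set E :=
  {s | ∀ x, f x₀ + ⟪s, x - x₀⟫ ≤ f x}

/-- Cone generated by a set: `{c • x : c ≥ 0, x ∈ A}`. -/
def coneOf (A : Set E) : Set E :=
  {y | ∃ c : ℝ, 0 ≤ c ∧ ∃ x ∈ A, y = c • x}

/-- Set of feasible directions of `C` at `x₀`. -/
def feasible (C : Set E) (x₀ : E) : Set E := {z | x₀ + z ∈ C}

/-- Tangent cone of `C` at `x₀`: the closure of the cone of feasible directions. -/
def tangentConeOf (C : Set E) (x₀ : E) : Set E := closure (coneOf (feasible C x₀))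

/-- Polar cone of a set `K`. -/
def polarCone (K : Set E) : Set E := {v | ∀ x ∈ K, ⟪v, x⟫ ≤ 0}

open Classical in
/-- Metric projection onto `K` (the unique nearest point when `K` is nonempty,
closed and convex). -/
def projSet (K : Set E) (x : E) : E :=
  if h : ∃ y ∈ K, dist x y = Metric.infDist x K then h.choose else x

/-- Matrix-vector multiplication as a map between Euclidean spaces. -/
def matVec {m n : ℕ} (A : Matrix (Fin m) (Fin n) ℝ) (x : EuclideanSpace ℝ (Fin n)) :
    EuclideanSpace ℝ (Fin m) :=
  (EuclideanSpace.equiv (Fin m) ℝ).symm (A.mulVec (EuclideanSpace.equiv (Fin n) ℝ x))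

/-- Statistical dimension of `K`: `E ‖Proj(g,K)‖²` for standard Gaussian `g`. -/
def statDim (n : ℕ) (K : Set (EuclideanSpace ℝ (Fin n))) : ℝ :=
  ∫ g, ‖projSet K g‖ ^ 2 ∂(stdGaussian n)

end

/-- Borel/product measurable structure on real matrices. -/
instance matrixMeasurableSpace {m n : ℕ} : MeasurableSpace (Matrix (Fin m) (Fin n) ℝ) :=
  (inferInstance : MeasurableSpace (Fin m → Fin n → ℝ))

section AuxStatement7

variable {E : Type*} [NormedAddCommGroup E] [InnerProductSpace ℝ E]

/-- `a ≤ b` from `a ≤ b + ε` for all `ε > 0`. -/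
lemma aux_le_of_forall_pos_le_add' {a b : ℝ} (h : ∀ ε : ℝ, 0 < ε → a ≤ b + ε) : a ≤ b := by
  by_contra hab
  push_neg at hab
  have := h ((a - b) / 2) (by linarith)
  linarith

lemma aux_subdiff_isClosed (f : E → ℝ) (x₀ : E) : IsClosed (subdiff f x₀) := by
  have h : subdiff f x₀ = ⋂ x : E, {s : E | f x₀ + ⟪s, x - x₀⟫ ≤ f x} := by
    ext s; simp [subdiff, Set.mem_iInter]
  rw [h]
  exact isClosed_iInter fun x =>
    isClosed_le (continuous_const.add (Continuous.inner continuous_id continuous_const))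
      continuous_const

lemma aux_polarCone_isClosed (K : Set E) : IsClosed (polarCone K) := by
  have h : polarCone K = ⋂ x ∈ K, {v : E | ⟪v, x⟫ ≤ 0} := by
    ext v; simp [polarCone, Set.mem_iInter]
  rw [h]
  exact isClosed_biInter fun x _ =>
    isClosed_le (Continuous.inner continuous_id continuous_const) continuous_const

variable [FiniteDimensional ℝ E]

lemma aux_continuous (f : E → ℝ) (hf : ConvexOn ℝ Set.univ f) : Continuous f :=
  continuousOn_univ.mp (hf.continuousOn isOpen_univ)

/-- Existence of a subgradient of a finite convex function on a
finite-dimensional real inner product space. -/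
lemma aux_subdiff_nonempty (f : E → ℝ) (hf : ConvexOn ℝ Set.univ f) (x₀ : E) :
    (subdiff f x₀).Nonempty := by
  have hcont : Continuous f := aux_continuous f hf
  set S : Set (E × ℝ) := {p | f p.1 < p.2} with hS
  have hSopen : IsOpen S := isOpen_lt (hcont.comp continuous_fst) continuous_snd
  have hSconv : Convex ℝ S := by
    rintro ⟨p1, p2⟩ hp ⟨q1, q2⟩ hq a b ha hb hab
    simp only [hS, Set.mem_setOf_eq] at hp hq ⊢
    have h1 := hf.2 (Set.mem_univ p1) (Set.mem_univ q1) ha hb hab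
    simp only [Prod.smul_mk, Prod.mk_add_mk, smul_eq_mul] at *
    have h2 : a * f p1 + b * f q1 < a * p2 + b * q2 := by
      rcases ha.eq_or_lt with h | h
      · have hb1 : b = 1 := by linarith
        rw [← h, hb1]; simpa using hq
      · have := mul_lt_mul_of_pos_left hp h
        have := mul_le_mul_of_nonneg_left hq.le hb
        linarith
    exact lt_of_le_of_lt h1 h2
  have hx₀S : ((x₀, f x₀) : E × ℝ) ∉ S := by simp [hS]
  obtain ⟨φ, hφ⟩ := geometric_hahn_banach_open_point hSconv hSopen hx₀S
  set L : E →L[ℝ] ℝ := φ.comp (ContinuousLinearMap.inl ℝ E ℝ) with hL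
  set c : ℝ := φ (0, 1) with hc'
  have hdecomp : ∀ p : E × ℝ, φ p = L p.1 + p.2 * c := by
    intro p
    have hp : p = ((p.1, 0) : E × ℝ) + p.2 • ((0 : E), (1 : ℝ)) := by
      ext <;> simp
    calc φ p = φ (((p.1, 0) : E × ℝ) + p.2 • ((0 : E), (1 : ℝ))) := by rw [← hp]
      _ = φ (p.1, 0) + p.2 * φ (0, 1) := by rw [map_add, φ.map_smul, smul_eq_mul]
      _ = L p.1 + p.2 * c := rfl
  have key : ∀ (x : E) (t : ℝ), f x < t → L x + t * c < L x₀ + f x₀ * c := by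
    intro x t ht
    have := hφ (x, t) ht
    rwa [hdecomp, hdecomp] at this
  have hc : c < 0 := by
    have := key x₀ (f x₀ + 1) (lt_add_one _)
    nlinarith
  have hkey2 : ∀ x : E, L x + f x * c ≤ L x₀ + f x₀ * c := by
    intro x
    apply aux_le_of_forall_pos_le_add'
    intro ε hε
    have hnc : 0 < -c := neg_pos.mpr hc
    have hεc : 0 < ε / (-c) := div_pos hε hnc
    have h2 := key x (f x + ε / (-c)) (by linarith)
    have h3 : (ε / (-c)) * c = -ε := by field_simp; rw [div_self hc.ne]
    nlinarith
  set s : E := (InnerProductSpace.toDual ℝ E).symm ((-c)⁻¹ • (L : E →L[ℝ] ℝ)) with hsdef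
  refine ⟨s, fun x => ?_⟩
  have hsx : ∀ v : E, ⟪s, v⟫ = (-c)⁻¹ * L v := by
    intro v
    rw [hsdef, InnerProductSpace.toDual_symm_apply]
    simp
  have h3 : L x - L x₀ ≤ -c * (f x - f x₀) := by
    have := hkey2 x; nlinarith
  have h4 := mul_le_mul_of_nonneg_left h3 (inv_pos.mpr (neg_pos.mpr hc)).le
  rw [inv_mul_cancel_left₀ (ne_of_gt (neg_pos.mpr hc))] at h4
  have h5 : ⟪s, x - x₀⟫ = (-c)⁻¹ * (L x - L x₀) := by rw [hsx, map_sub]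
  rw [h5]; linarith

/-- The subdifferential is compact. -/
lemma aux_subdiff_isCompact (f : E → ℝ) (hf : ConvexOn ℝ Set.univ f) (x₀ : E) :
    IsCompact (subdiff f x₀) := by
  have hcont : Continuous f := aux_continuous f hf
  obtain ⟨p, hp, hmax⟩ := (isCompact_closedBall x₀ 1).exists_isMaxOn
    ⟨x₀, Metric.mem_closedBall_self zero_le_one⟩ hcont.continuousOn
  set M : ℝ := f p - f x₀ with hM
  have hMbd : ∀ u : E, ‖u‖ ≤ 1 → f (x₀ + u) - f x₀ ≤ M := by
    intro u hu
    have : x₀ + u ∈ Metric.closedBall x₀ 1 := by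
      simp [Metric.mem_closedBall, dist_eq_norm, hu]
    have := hmax this
    simp only [Set.mem_setOf_eq] at this
    simp only [hM]; linarith [this]
  have hsub : subdiff f x₀ ⊆ Metric.closedBall 0 M := by
    intro s hs
    rw [Metric.mem_closedBall, dist_zero_right]
    rcases eq_or_ne s 0 with rfl | hs0
    · have := hMbd 0 (by simp)
      simpa using this
    · have hnorm : (0 : ℝ) < ‖s‖ := norm_pos_iff.mpr hs0
      set u : E := ‖s‖⁻¹ • s with hu
      have hu1 : ‖u‖ ≤ 1 := by
        rw [hu, norm_smul]
        simp [abs_of_nonneg (inv_nonneg.mpr hnorm.le), inv_mul_cancel₀ hnorm.ne']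
      have hmem := hs (x₀ + u)
      have hinner : ⟪s, (x₀ + u) - x₀⟫ = ‖s‖ := by
        have : (x₀ + u) - x₀ = u := by abel
        rw [this, hu, real_inner_smul_right, real_inner_self_eq_norm_sq]
        field_simp
      rw [hinner] at hmem
      have := hMbd u hu1
      linarith
  exact IsCompact.of_isClosed_subset (isCompact_closedBall 0 M)
    (aux_subdiff_isClosed f x₀) hsub

end AuxStatement7

/-- Deterministic error upper bound.
If `x*` minimizes `τ f(x) + ½‖(x₀+z) − x‖²` over `C`, then
`‖x* − x₀‖ ≤ dist(z, τ∂f(x₀) + T_C(x₀)*)`, and the Minkowski sum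
`τ∂f(x₀) + T_C(x₀)*` is a closed set. -/
theorem statement7 {n : ℕ} (f : EuclideanSpace ℝ (Fin n) → ℝ)
    (hf : ConvexOn ℝ Set.univ f)
    (C : Set (EuclideanSpace ℝ (Fin n)))
    (hCne : C.Nonempty) (hCcl : IsClosed C) (hCconv : Convex ℝ C)
    (x₀ : EuclideanSpace ℝ (Fin n)) (hx₀ : x₀ ∈ C)
    (τ : ℝ) (hτ : 0 ≤ τ) (z : EuclideanSpace ℝ (Fin n))
    (xstar : EuclideanSpace ℝ (Fin n)) (hmem : xstar ∈ C)
    (hmin : IsMinOn (fun x => τ * f x + (1 / 2) * ‖(x₀ + z) - x‖ ^ 2) C xstar) :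
    ‖xstar - x₀‖ ≤
      Metric.infDist z (τ • subdiff f x₀ + polarCone (tangentConeOf C x₀)) ∧
    IsClosed (τ • subdiff f x₀ + polarCone (tangentConeOf C x₀)) := by
  have hclosed : IsClosed (τ • subdiff f x₀ + polarCone (tangentConeOf C x₀)) := by
    have hcomp : IsCompact (τ • subdiff f x₀) := (aux_subdiff_isCompact f hf x₀).smul τ
    have hpol := aux_polarCone_isClosed (tangentConeOf C x₀)
    exact IsClosed.vadd_left_of_isCompact hpol hcomp
  refine ⟨?_, hclosed⟩
  set w : EuclideanSpace ℝ (Fin n) := xstar - x₀ with hw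
  set I : ℝ := ⟪z - w, w⟫ with hI
  set N : ℝ := ‖w‖ ^ 2 with hN
  have hN0 : 0 ≤ N := by rw [hN]; positivity
  -- step 1: variational inequality
  have hvar : τ * f xstar - τ * f x₀ ≤ I := by
    apply aux_le_of_forall_pos_le_add'
    intro ε hε
    set t : ℝ := min 1 (2 * ε / (N + 1)) with htdef
    have ht0 : 0 < t := lt_min one_pos (by positivity)
    have ht1 : t ≤ 1 := min_le_left _ _
    have hp : (1 - t) • xstar + t • x₀ ∈ C :=
      hCconv hmem hx₀ (by linarith) ht0.le (by ring)
    have hmin' := hmin hp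
    simp only [Set.mem_setOf_eq] at hmin'
    have hvec : (x₀ + z) - ((1 - t) • xstar + t • x₀) = (z - w) + t • w := by
      rw [hw]; module
    have hvec2 : (x₀ + z) - xstar = z - w := by rw [hw]; abel
    have hnorm : ‖(z - w) + t • w‖ ^ 2 = ‖z - w‖ ^ 2 + 2 * t * I + t ^ 2 * N := by
      rw [norm_add_sq_real, real_inner_smul_right, norm_smul]
      simp only [Real.norm_eq_abs, mul_pow, sq_abs]
      rw [hI, hN]; ring
    rw [hvec, hvec2, hnorm] at hmin'
    have hfp : f ((1 - t) • xstar + t • x₀) ≤ (1 - t) * f xstar + t * f x₀ :=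
      hf.2 (Set.mem_univ xstar) (Set.mem_univ x₀) (by linarith) ht0.le (by ring)
    have hτfp : τ * f ((1 - t) • xstar + t • x₀) ≤ τ * ((1 - t) * f xstar + t * f x₀) :=
      mul_le_mul_of_nonneg_left hfp hτ
    have hkey : t * (τ * f xstar - τ * f x₀ - I) ≤ t ^ 2 / 2 * N := by nlinarith
    have hdiv : τ * f xstar - τ * f x₀ - I ≤ t / 2 * N := by
      have h2 : t ^ 2 / 2 * N = t * (t / 2 * N) := by ring
      rw [h2] at hkey
      exact le_of_mul_le_mul_left hkey ht0
    have ht' : t ≤ 2 * ε / (N + 1) := min_le_right _ _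
    have ht'' : t * (N + 1) ≤ 2 * ε :=
      (le_div_iff₀ (by positivity : (0 : ℝ) < N + 1)).mp ht'
    have : t / 2 * N ≤ ε := by nlinarith
    linarith
  -- step 2: pointwise bound over the Minkowski sum
  have hwT : w ∈ tangentConeOf C x₀ := by
    apply subset_closure
    refine ⟨1, zero_le_one, w, ?_, (one_smul ℝ w).symm⟩
    show x₀ + w ∈ C
    have : x₀ + w = xstar := by rw [hw]; abel
    rwa [this]
  have hbound : ∀ u ∈ τ • subdiff f x₀ + polarCone (tangentConeOf C x₀),
      ‖w‖ ≤ dist z u := by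
    rintro u hu
    rw [Set.mem_add] at hu
    obtain ⟨a, ha, v, hv, rfl⟩ := hu
    obtain ⟨s, hsmem, rfl⟩ := ha
    have hsub : f x₀ + ⟪s, w⟫ ≤ f xstar := by
      have := hsmem xstar; rwa [← hw] at this
    have hτsub : τ * ⟪s, w⟫ ≤ τ * f xstar - τ * f x₀ := by
      have := mul_le_mul_of_nonneg_left hsub hτ
      nlinarith
    have hvw : ⟪v, w⟫ ≤ 0 := hv w hwT
    have hinner : ⟪z - (τ • s + v), w⟫ = ⟪z, w⟫ - τ * ⟪s, w⟫ - ⟪v, w⟫ := by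
      rw [inner_sub_left, inner_add_left, real_inner_smul_left]; ring
    have hww : ‖w‖ ^ 2 = ⟪z, w⟫ - I := by
      rw [hI, inner_sub_left, real_inner_self_eq_norm_sq]; ring
    have hsq : ‖w‖ ^ 2 ≤ ⟪z - (τ • s + v), w⟫ := by
      rw [hinner, hww]; linarith
    have hcs : ⟪z - (τ • s + v), w⟫ ≤ ‖z - (τ • s + v)‖ * ‖w‖ := real_inner_le_norm _ _
    rw [dist_eq_norm]
    nlinarith [norm_nonneg w, norm_nonneg (z - (τ • s + v))]
  -- step 3: nonemptiness and conclusion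
  obtain ⟨s₀, hs₀⟩ := aux_subdiff_nonempty f hf x₀
  have h0pol : (0 : EuclideanSpace ℝ (Fin n)) ∈ polarCone (tangentConeOf C x₀) := by
    intro x hx; simp
  have hSne : (τ • subdiff f x₀ + polarCone (tangentConeOf C x₀)).Nonempty :=
    ⟨τ • s₀ + 0, Set.add_mem_add (Set.smul_mem_smul_set hs₀) h0pol⟩
  rw [Metric.infDist_eq_iInf]
  haveI := hSne.to_subtype
  exact le_ciInf fun u => hbound u u.2
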